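/- arXiv:1706.00306 — 2 statements merged into one kernel-verified Lean document; each statement's English description precedes it below -/
import Mathlib

section
/- Mass conservation of the semi-discrete NLSE system: if r(t), s(t) ∈ ℝ^N solve the coupled system M r'(t) = A s(t) + b_s(r(t), s(t)) and M s'(t) = −A r(t) − b_r(r(t), s(t)), where M is symmetric positive definite, A is symmetric, and the nonlinear terms satisfy r^T b_s(r,s) = s^T b_r(r,s) for all r, s (cross-symmetry of the cubic nonlinearity), then the discrete mass N(t) = r(t)^T M r(t) + s(t)^T M s(t) is constant in time. -/
open Matrix

lemma quad_hasDerivAt {N : ℕ} (M : Matrix (Fin N) (Fin N) ℝ)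
    (r u : ℝ → Fin N → ℝ) (hr : ∀ t, HasDerivAt r (u t) t) (t : ℝ) :
    HasDerivAt (fun t => r t ⬝ᵥ M.mulVec (r t))
      (u t ⬝ᵥ M.mulVec (r t) + r t ⬝ᵥ M.mulVec (u t)) t := by
  have hcomp : ∀ (i : Fin N) (t : ℝ), HasDerivAt (fun t => r t i) (u t i) t := by
    intro i t
    exact (hasDerivAt_pi.mp (hr t)) i
  have : HasDerivAt (fun t => ∑ i, r t i * ∑ j, M i j * r t j)
      (∑ i, (u t i * ∑ j, M i j * r t j + r t i * ∑ j, M i j * u t j)) t := by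
    apply HasDerivAt.fun_sum
    intro i _
    exact (hcomp i t).mul (HasDerivAt.fun_sum fun j _ => (hcomp j t).const_mul (M i j))
  have hf : (fun t => r t ⬝ᵥ M.mulVec (r t)) = fun t => ∑ i, r t i * ∑ j, M i j * r t j := by
    funext t; simp [dotProduct, Matrix.mulVec]
  have hv : u t ⬝ᵥ M.mulVec (r t) + r t ⬝ᵥ M.mulVec (u t) =
      ∑ i, (u t i * ∑ j, M i j * r t j + r t i * ∑ j, M i j * u t j) := by
    simp [dotProduct, Matrix.mulVec, Finset.sum_add_distrib]
  rw [hf, hv]; exact this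

lemma sym_dot {N : ℕ} (M : Matrix (Fin N) (Fin N) ℝ) (hMs : Mᵀ = M)
    (x y : Fin N → ℝ) : x ⬝ᵥ M.mulVec y = y ⬝ᵥ M.mulVec x := by
  rw [Matrix.dotProduct_mulVec, ← Matrix.mulVec_transpose, hMs, dotProduct_comm]

/-- Mass conservation of the semi-discrete NLSE system: if
`M r' = A s + b_s(r,s)` and `M s' = -A r - b_r(r,s)` with `M` symmetric positive
definite, `A` symmetric, and the cross-symmetry `rᵀ b_s(r,s) = sᵀ b_r(r,s)`,
then the discrete mass `rᵀ M r + sᵀ M s` is constant in time. -/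
theorem stmt_6 {N : ℕ} (M A : Matrix (Fin N) (Fin N) ℝ)
    (hM : M.PosDef) (hMs : Mᵀ = M) (hA : Aᵀ = A)
    (br bs : (Fin N → ℝ) → (Fin N → ℝ) → (Fin N → ℝ))
    (hcross : ∀ r s : Fin N → ℝ, r ⬝ᵥ bs r s = s ⬝ᵥ br r s)
    (r s r' s' : ℝ → Fin N → ℝ)
    (hr : ∀ t, HasDerivAt r (r' t) t) (hs : ∀ t, HasDerivAt s (s' t) t)
    (hoder : ∀ t, M.mulVec (r' t) = A.mulVec (s t) + bs (r t) (s t))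
    (hodes : ∀ t, M.mulVec (s' t) = -(A.mulVec (r t)) - br (r t) (s t)) :
    ∀ t₁ t₂ : ℝ,
      r t₁ ⬝ᵥ M.mulVec (r t₁) + s t₁ ⬝ᵥ M.mulVec (s t₁) =
      r t₂ ⬝ᵥ M.mulVec (r t₂) + s t₂ ⬝ᵥ M.mulVec (s t₂) := by
  intro t₁ t₂
  have key : ∀ t : ℝ, HasDerivAt
      (fun t => r t ⬝ᵥ M.mulVec (r t) + s t ⬝ᵥ M.mulVec (s t)) 0 t := by
    intro t
    have h1 := (quad_hasDerivAt M r r' hr t).add (quad_hasDerivAt M s s' hs t)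
    have e : (r' t ⬝ᵥ M.mulVec (r t) + r t ⬝ᵥ M.mulVec (r' t)) +
        (s' t ⬝ᵥ M.mulVec (s t) + s t ⬝ᵥ M.mulVec (s' t)) = 0 := by
      rw [sym_dot M hMs (r' t) (r t), sym_dot M hMs (s' t) (s t),
        hoder t, hodes t]
      have hAsym : r t ⬝ᵥ A.mulVec (s t) = s t ⬝ᵥ A.mulVec (r t) :=
        sym_dot A hA (r t) (s t)
      have hc := hcross (r t) (s t)
      simp [dotProduct_add, dotProduct_sub, dotProduct_neg,
        hAsym, hc]
      ring
    rwa [e] at h1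
  have := is_const_of_deriv_eq_zero
    (f := fun t => r t ⬝ᵥ M.mulVec (r t) + s t ⬝ᵥ M.mulVec (s t))
    (fun t => (key t).differentiableAt) (fun t => (key t).deriv) t₁ t₂
  simpa using this
end

section
/- DEIM energy drift bound: let z^r solve (z^r)' = J_r[U^T A U z^r + U^T b̂(U z^r)], where b̂ is the DEIM approximation of b. If ∇E(Uz^r) = A U z^r + b(U z^r), then d/dt E(U z^r(t)) = [U^T ∇E(Uz^r)]^T J_r U^T [b̂(Uz^r) − b(Uz^r)], and consequently |d/dt E(U z^r(t))| ≤ ‖∇E(Uz^r)‖ · ‖U‖² · ‖J_r‖ · ‖b̂(Uz^r) − b(Uz^r)‖ in operator/Euclidean norms. -/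
open Matrix

/-- The operator (spectral) norm of a real matrix, via its action on
Euclidean spaces. -/
noncomputable def matOpNorm {m n : ℕ} (A : Matrix (Fin m) (Fin n) ℝ) : ℝ :=
  ‖LinearMap.toContinuousLinearMap (Matrix.toEuclideanLin A)‖

/-- View a plain vector as an element of Euclidean space (so that `‖·‖` is the
Euclidean norm). -/
def toEuc {n : ℕ} (v : Fin n → ℝ) : EuclideanSpace ℝ (Fin n) := WithLp.toLp 2 v

private lemma euc_inner_eq {n : ℕ} (x y : EuclideanSpace ℝ (Fin n)) :
    (inner ℝ x y : ℝ) = (x : Fin n → ℝ) ⬝ᵥ (y : Fin n → ℝ) := by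
  simp [PiLp.inner_apply, dotProduct, mul_comm]

private lemma toEuclideanLin_apply' {m n : ℕ} (M : Matrix (Fin m) (Fin n) ℝ)
    (x : Fin n → ℝ) : Matrix.toEuclideanLin M (toEuc x) = toEuc (M.mulVec x) := by
  simp [toEuc, Matrix.toEuclideanLin_apply]

private lemma norm_mulVec_le {m n : ℕ} (M : Matrix (Fin m) (Fin n) ℝ) (x : Fin n → ℝ) :
    ‖toEuc (M.mulVec x)‖ ≤ matOpNorm M * ‖toEuc x‖ := by
  have h := (LinearMap.toContinuousLinearMap (Matrix.toEuclideanLin M)).le_opNorm (toEuc x)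
  simpa [matOpNorm, toEuclideanLin_apply'] using h

private lemma matOpNorm_transpose {m n : ℕ} (M : Matrix (Fin m) (Fin n) ℝ) :
    matOpNorm Mᵀ = matOpNorm M := by
  have h1 : Mᵀ = M.conjTranspose := by ext i j; simp [Matrix.conjTranspose_apply]
  rw [matOpNorm, h1, Matrix.toEuclideanLin_conjTranspose_eq_adjoint,
    LinearMap.adjoint_toContinuousLinearMap]
  exact LinearIsometryEquiv.norm_map _ _

private lemma skew_self {k : ℕ} (Jr : Matrix (Fin k) (Fin k) ℝ) (hJr : Jrᵀ = -Jr)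
    (x : Fin k → ℝ) : x ⬝ᵥ Jr.mulVec x = 0 := by
  have h1 : x ⬝ᵥ Jr.mulVec x = (Jrᵀ.mulVec x) ⬝ᵥ x := by
    rw [dotProduct_mulVec, ← mulVec_transpose]
  rw [hJr, neg_mulVec, neg_dotProduct, dotProduct_comm] at h1
  have h2 : x ⬝ᵥ Jr *ᵥ x = Jr *ᵥ x ⬝ᵥ x := dotProduct_comm _ _
  linarith

private lemma euc_inner_eq' {n : ℕ} (x y : Fin n → ℝ) :
    (inner ℝ (toEuc x) (toEuc y) : ℝ) = x ⬝ᵥ y := euc_inner_eq _ _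

private lemma alg_key {n k : ℕ} (U : Matrix (Fin n) (Fin k) ℝ)
    (Jr : Matrix (Fin k) (Fin k) ℝ) (hJr : Jrᵀ = -Jr) (a bb bh : Fin n → ℝ) :
    (a + bb) ⬝ᵥ (U.mulVec (Jr.mulVec (Uᵀ.mulVec a + Uᵀ.mulVec bh)))
      = (Uᵀ.mulVec (a + bb)) ⬝ᵥ (Jr.mulVec (Uᵀ.mulVec (bh - bb))) := by
  have h1 : Uᵀ.mulVec a + Uᵀ.mulVec bh
      = (Uᵀ.mulVec a + Uᵀ.mulVec bb) + Uᵀ.mulVec (bh - bb) := by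
    rw [mulVec_sub]; abel
  have h2 : Uᵀ.mulVec (a + bb) = Uᵀ.mulVec a + Uᵀ.mulVec bb := mulVec_add _ _ _
  rw [dotProduct_mulVec (a + bb), ← mulVec_transpose, h1, h2, mulVec_add, dotProduct_add,
    skew_self Jr hJr, zero_add]

private lemma matOpNorm_nonneg {m n : ℕ} (M : Matrix (Fin m) (Fin n) ℝ) :
    0 ≤ matOpNorm M := norm_nonneg _


/-- DEIM energy drift bound: if `(z^r)' = J_r (Uᵀ A U z^r + Uᵀ b̂(U z^r))`, `J_r`
skew-symmetric, and `∇E(w) = A w + b(w)`, then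
`d/dt E(U z^r) = [Uᵀ ∇E(U z^r)]ᵀ J_r Uᵀ (b̂(U z^r) - b(U z^r))` and
`|d/dt E(U z^r)| ≤ ‖∇E(U z^r)‖ ‖U‖² ‖J_r‖ ‖b̂(U z^r) - b(U z^r)‖`. -/
theorem stmt_10 {n k : ℕ} (U : Matrix (Fin n) (Fin k) ℝ)
    (Jr : Matrix (Fin k) (Fin k) ℝ) (hJr : Jrᵀ = -Jr)
    (A : Matrix (Fin n) (Fin n) ℝ)
    (b bhat : (Fin n → ℝ) → (Fin n → ℝ))
    (E : EuclideanSpace ℝ (Fin n) → ℝ)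
    (hE : ∀ w : EuclideanSpace ℝ (Fin n),
      HasGradientAt E (toEuc (A.mulVec w + b w)) w)
    (zr zr' : ℝ → EuclideanSpace ℝ (Fin k))
    (hzr : ∀ t, HasDerivAt zr (zr' t) t)
    (hode : ∀ t, (zr' t : Fin k → ℝ) =
      Jr.mulVec (Uᵀ.mulVec (A.mulVec (U.mulVec (zr t))) +
                 Uᵀ.mulVec (bhat (U.mulVec (zr t))))) :
    ∀ t,
      (deriv (fun τ => E (WithLp.toLp 2 (U.mulVec (zr τ)))) t =
        (Uᵀ.mulVec (A.mulVec (U.mulVec (zr t)) + b (U.mulVec (zr t)))) ⬝ᵥ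
          (Jr.mulVec (Uᵀ.mulVec (bhat (U.mulVec (zr t)) - b (U.mulVec (zr t)))))) ∧
      |deriv (fun τ => E (WithLp.toLp 2 (U.mulVec (zr τ)))) t| ≤
        ‖toEuc (A.mulVec (U.mulVec (zr t)) + b (U.mulVec (zr t)))‖ *
          matOpNorm U ^ 2 * matOpNorm Jr *
          ‖toEuc (bhat (U.mulVec (zr t)) - b (U.mulVec (zr t)))‖ := by
  intro t
  have hUz : HasDerivAt (fun τ => toEuc (U.mulVec (zr τ))) (toEuc (U.mulVec (zr' t))) t := by
    have h := (LinearMap.toContinuousLinearMap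
      (Matrix.toEuclideanLin U)).hasFDerivAt.comp_hasDerivAt t (hzr t)
    simpa [Function.comp_def, toEuc, Matrix.toEuclideanLin_apply] using h
  have hderiv : HasDerivAt (fun τ => E (WithLp.toLp 2 (U.mulVec (zr τ))))
      ((inner ℝ (toEuc (A.mulVec (U.mulVec (zr t)) + b (U.mulVec (zr t))))
        (toEuc (U.mulVec (zr' t))) : ℝ)) t := by
    have h := (hE (toEuc (U.mulVec (zr t)))).hasFDerivAt.comp_hasDerivAt t hUz
    simp only [InnerProductSpace.toDual_apply_apply] at h
    exact h
  have hde : deriv (fun τ => E (WithLp.toLp 2 (U.mulVec (zr τ)))) t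
      = inner ℝ (toEuc (A.mulVec (U.mulVec (zr t)) + b (U.mulVec (zr t))))
          (toEuc (U.mulVec (zr' t))) := hderiv.deriv
  have heq : deriv (fun τ => E (WithLp.toLp 2 (U.mulVec (zr τ)))) t =
      (Uᵀ.mulVec (A.mulVec (U.mulVec (zr t)) + b (U.mulVec (zr t)))) ⬝ᵥ
        (Jr.mulVec (Uᵀ.mulVec (bhat (U.mulVec (zr t)) - b (U.mulVec (zr t))))) := by
    rw [hde, euc_inner_eq', hode t]
    exact alg_key U Jr hJr _ _ _
  refine ⟨heq, ?_⟩
  rw [heq]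
  have hgb : ‖toEuc (Uᵀ.mulVec (A.mulVec (U.mulVec (zr t)) + b (U.mulVec (zr t))))‖
      ≤ matOpNorm U * ‖toEuc (A.mulVec (U.mulVec (zr t)) + b (U.mulVec (zr t)))‖ := by
    simpa [matOpNorm_transpose] using norm_mulVec_le Uᵀ _
  have hdb : ‖toEuc (Uᵀ.mulVec (bhat (U.mulVec (zr t)) - b (U.mulVec (zr t))))‖
      ≤ matOpNorm U * ‖toEuc (bhat (U.mulVec (zr t)) - b (U.mulVec (zr t)))‖ := by
    simpa [matOpNorm_transpose] using norm_mulVec_le Uᵀ _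
  have hJd : ‖toEuc (Jr.mulVec (Uᵀ.mulVec (bhat (U.mulVec (zr t)) - b (U.mulVec (zr t)))))‖
      ≤ matOpNorm Jr * (matOpNorm U * ‖toEuc (bhat (U.mulVec (zr t)) - b (U.mulVec (zr t)))‖) :=
    le_trans (norm_mulVec_le _ _)
      (mul_le_mul_of_nonneg_left hdb (matOpNorm_nonneg Jr))
  calc |(Uᵀ.mulVec (A.mulVec (U.mulVec (zr t)) + b (U.mulVec (zr t)))) ⬝ᵥ
          (Jr.mulVec (Uᵀ.mulVec (bhat (U.mulVec (zr t)) - b (U.mulVec (zr t)))))|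
      = |(inner ℝ (toEuc (Uᵀ.mulVec (A.mulVec (U.mulVec (zr t)) + b (U.mulVec (zr t)))))
          (toEuc (Jr.mulVec (Uᵀ.mulVec (bhat (U.mulVec (zr t)) - b (U.mulVec (zr t)))))) : ℝ)| := by
        rw [euc_inner_eq']
    _ ≤ ‖toEuc (Uᵀ.mulVec (A.mulVec (U.mulVec (zr t)) + b (U.mulVec (zr t))))‖ *
        ‖toEuc (Jr.mulVec (Uᵀ.mulVec (bhat (U.mulVec (zr t)) - b (U.mulVec (zr t)))))‖ :=
        abs_real_inner_le_norm _ _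
    _ ≤ (matOpNorm U * ‖toEuc (A.mulVec (U.mulVec (zr t)) + b (U.mulVec (zr t)))‖) *
        (matOpNorm Jr * (matOpNorm U *
          ‖toEuc (bhat (U.mulVec (zr t)) - b (U.mulVec (zr t)))‖)) := by
        apply mul_le_mul hgb hJd (norm_nonneg _)
        exact mul_nonneg (matOpNorm_nonneg U) (norm_nonneg _)
    _ = ‖toEuc (A.mulVec (U.mulVec (zr t)) + b (U.mulVec (zr t)))‖ *
          matOpNorm U ^ 2 * matOpNorm Jr *
          ‖toEuc (bhat (U.mulVec (zr t)) - b (U.mulVec (zr t)))‖ := by ring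
end
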